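/- Let $g_r \in \mathbb{Z}_2[w_2,w_3]$ satisfy $g_0=1$, $g_{-1}=g_{-2}=0$, and $g_r = w_2 g_{r-2} + w_3 g_{r-3}$ for $r\geq 1$ (this is the $k=3$ case). Then for every $t\geq 2$, $g_{2^t-3}=0$. -/
import Mathlib


open MvPolynomial

/-- In `ℤ₂[w₂,w₃]` (with `X 0 = w₂`, `X 1 = w₃`), with `g₀ = 1`,
`g_{-1} = g_{-2} = 0` and `g_r = w₂ g_{r-2} + w₃ g_{r-3}` for `r ≥ 1` (the `k = 3` case),
`g_{2^t - 3} = 0` for every `t ≥ 2`. -/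
theorem stmt_8 (g : ℤ → MvPolynomial (Fin 2) (ZMod 2))
    (hneg : ∀ r : ℤ, -2 ≤ r → r < 0 → g r = 0)
    (h0 : g 0 = 1)
    (hrec : ∀ r : ℤ, 1 ≤ r → g r = X 0 * g (r - 2) + X 1 * g (r - 3)) :
    ∀ t : ℕ, 2 ≤ t → g ((2 : ℤ) ^ t - 3) = 0 := by
  have sq : ∀ a b : MvPolynomial (Fin 2) (ZMod 2), (a + b) ^ 2 = a ^ 2 + b ^ 2 := by
    intro a b
    exact add_pow_char _ _ _
  have two0 : (2 : MvPolynomial (Fin 2) (ZMod 2)) = 0 := by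
    exact_mod_cast CharP.cast_eq_zero (MvPolynomial (Fin 2) (ZMod 2)) 2
  have hm1 : g (-1) = 0 := hneg (-1) (by norm_num) (by norm_num)
  have hm2 : g (-2) = 0 := hneg (-2) (by norm_num) (by norm_num)
  have h1 : g 1 = 0 := by
    have := hrec 1 (by norm_num)
    norm_num at this
    rw [this, hm1, hm2]; ring
  have h2 : g 2 = X 0 := by
    have := hrec 2 (by norm_num)
    norm_num at this
    rw [this, h0, hm1]; ring
  have h3 : g 3 = X 1 := by
    have := hrec 3 (by norm_num)
    norm_num at this
    rw [this, h0, h1]; ring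
  -- key doubling lemma
  have key : ∀ n : ℕ, g (2 * (n : ℤ)) = (g n) ^ 2 + X 0 * (g ((n : ℤ) - 1)) ^ 2 ∧
      g (2 * (n : ℤ) + 1) = X 1 * (g ((n : ℤ) - 1)) ^ 2 := by
    intro n
    induction n using Nat.strong_induction_on with
    | _ n IH =>
      match n with
      | 0 => 
        constructor
        · norm_num [h0, hm1]
        · norm_num [h1, hm1]
      | 1 =>
        constructor
        · norm_num [h0, h1, h2]
        · norm_num [h0, h3]
      | (m + 2) =>
        obtain ⟨A1, B1⟩ := IH (m + 1) (by omega)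
        obtain ⟨A0, B0⟩ := IH m (by omega)
        push_cast at A1 B1 A0 B0 ⊢
        set k : ℤ := (m : ℤ) with hk
        have e1 : g (2 * (k + 2)) = X 0 * g (2 * (k + 1)) + X 1 * g (2 * k + 1) := by
          have := hrec (2 * (k + 2)) (by omega)
          convert this using 3 <;> ring
        have e2 : g (2 * (k + 2) + 1) = X 0 * g (2 * (k + 1) + 1) + X 1 * g (2 * (k + 1)) := by
          have := hrec (2 * (k + 2) + 1) (by omega)
          convert this using 3 <;> ring
        have e3 : g (k + 2) = X 0 * g k + X 1 * g (k - 1) := by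
          have := hrec (k + 2) (by omega)
          convert this using 3 <;> ring
        have A1' : g (2 * (k + 1)) = g (k + 1) ^ 2 + X 0 * g k ^ 2 := by
          convert A1 using 4 <;> ring
        have B1' : g (2 * (k + 1) + 1) = X 1 * g k ^ 2 := by
          convert B1 using 4 <;> ring
        constructor
        · have ea : (k + 2 - 1 : ℤ) = k + 1 := by ring
          rw [e1, A1', B0, e3, sq, ea]
          have : (X 0 * g k) ^ 2 + (X 1 * g (k - 1)) ^ 2 + X 0 * g (k + 1) ^ 2
              = X 0 * (g (k + 1) ^ 2 + X 0 * g k ^ 2) + X 1 * (X 1 * g (k - 1) ^ 2) := by ring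
          exact this.symm
        · rw [e2, B1', A1']
          have hx : X 0 * (X 1 * g k ^ 2) + X 1 * (g (k + 1) ^ 2 + X 0 * g k ^ 2)
              = X 1 * g (k + 1) ^ 2 + 2 * (X 0 * X 1 * g k ^ 2) := by ring
          rw [hx, two0]
          ring
  -- main induction on t
  intro t ht
  induction t with
  | zero => omega
  | succ t IHt =>
    rcases Nat.lt_or_ge t 2 with h | h
    · interval_cases t
      · omega
      · norm_num [h1]
    · have ht' := IHt h
      have hm : (0:ℤ) ≤ 2 ^ t - 2 := by
        have : (2:ℤ) ^ t ≥ 2 ^ 1 := by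
          apply pow_le_pow_right₀ (by norm_num) (by omega)
        simp at this; omega
      obtain ⟨m, hmn⟩ := Int.eq_ofNat_of_zero_le hm
      have := (key m).2
      rw [← hmn] at this
      have harg : (2:ℤ) ^ (t + 1) - 3 = 2 * (2 ^ t - 2) + 1 := by ring
      have harg2 : (2:ℤ) ^ t - 2 - 1 = 2 ^ t - 3 := by ring
      rw [harg, this, harg2, ht']
      ring
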